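/- (Modified hypercontractive inequality) Let n ≥ 1, let 0 ≤ ρ ≤ 1, let q > 1, and let 0 ≤ λ ≤ 1 satisfy ρ^λ · √(q−1) ≤ 1 (with 0^0 = 1). Then for every f : {-1,1}^n → ℝ, ‖T_ρ f‖_q ≤ ‖T_ρ f‖₂^{1−λ} · ‖f‖₂^{λ}. -/

import Mathlib

noncomputable section

/-- The real value `±1` associated with a Boolean coordinate (`true ↦ 1`, `false ↦ -1`). -/
def sgn (b : Bool) : ℝ := if b then 1 else -1

/-- Expectation over the uniform probability measure on the hypercube `{-1,1}^n`,
identified with `Fin n → Bool`. -/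
def cubeExpect {n : ℕ} (f : (Fin n → Bool) → ℝ) : ℝ :=
  (∑ x : Fin n → Bool, f x) / 2 ^ n

/-- The Fourier character `χ_S(x) = ∏_{i ∈ S} x_i`. -/
def chi {n : ℕ} (S : Finset (Fin n)) (x : Fin n → Bool) : ℝ :=
  ∏ i ∈ S, sgn (x i)

/-- The Fourier coefficient `f̂(S) = E[f(x) χ_S(x)]`. -/
def fourierCoef {n : ℕ} (f : (Fin n → Bool) → ℝ) (S : Finset (Fin n)) : ℝ :=
  cubeExpect fun x => f x * chi S x

/-- The noise operator `T_ρ f = Σ_S ρ^{|S|} f̂(S) χ_S` (with `0^0 = 1`). -/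
def noiseOp {n : ℕ} (ρ : ℝ) (f : (Fin n → Bool) → ℝ) (x : Fin n → Bool) : ℝ :=
  ∑ S : Finset (Fin n), ρ ^ S.card * fourierCoef f S * chi S x

/-- The normalized `ℓ_p` norm `‖f‖_p = (E |f|^p)^{1/p}`. -/
def cubeNorm {n : ℕ} (p : ℝ) (f : (Fin n → Bool) → ℝ) : ℝ :=
  (cubeExpect fun x => |f x| ^ p) ^ (1 / p)

/-- `x` with its `i`-th coordinate negated. -/
def flipAt {n : ℕ} (x : Fin n → Bool) (i : Fin n) : Fin n → Bool :=
  Function.update x i (!(x i))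

/-- The Dirichlet form `D(f,g) = ½ E_{x,i}[(f(x) − f(x^{⊕i}))(g(x) − g(x^{⊕i}))]`,
with `x` uniform on the cube and `i` uniform on the coordinates. -/
def dirichletForm {n : ℕ} (f g : (Fin n → Bool) → ℝ) : ℝ :=
  (1/2) * cubeExpect fun x =>
    (∑ i : Fin n, (f x - f (flipAt x i)) * (g x - g (flipAt x i))) / n

/-- The entropy `Ent(g) = E[g log g] − (E g) log (E g)` (with `0 log 0 = 0`,
as `Real.log 0 = 0`). -/
def cubeEntropy {n : ℕ} (g : (Fin n → Bool) → ℝ) : ℝ :=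
  cubeExpect (fun x => g x * Real.log (g x)) - cubeExpect g * Real.log (cubeExpect g)

/-- The variance `Var(f) = E[f²] − (E f)²`. -/
def cubeVar {n : ℕ} (f : (Fin n → Bool) → ℝ) : ℝ :=
  cubeExpect (fun x => f x ^ 2) - (cubeExpect f) ^ 2

/-- The influence of coordinate `i`: `Inf_i(f) = Σ_{S ∋ i} f̂(S)²`. -/
def influence {n : ℕ} (i : Fin n) (f : (Fin n → Bool) → ℝ) : ℝ :=
  ∑ S ∈ Finset.univ.filter (fun S : Finset (Fin n) => i ∈ S), fourierCoef f S ^ 2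

section ModHC
open Real Finset


lemma aux_uv {p t : ℝ} (hp : 1 ≤ p) (ht0 : 0 ≤ t) (ht1 : t ≤ 1) :
    (1 - p*t) * (1+t)^p ≤ (1 + p*t) * (1-t)^p := by
  rcases le_or_gt 1 (p*t) with h | h
  · have h2 : (0:ℝ) ≤ (1+t)^p := rpow_nonneg (by linarith) p
    have h3 : (0:ℝ) ≤ (1 + p*t) * (1-t)^p :=
      mul_nonneg (by nlinarith) (rpow_nonneg (by linarith) p)
    have h4 : (1 - p*t) * (1+t)^p ≤ 0 := mul_nonpos_of_nonpos_of_nonneg (by linarith) h2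
    linarith
  · have hp0 : (0:ℝ) < p := lt_of_lt_of_le one_pos hp
    have htp : t ≤ p*t := le_mul_of_one_le_left ht0 hp
    have ht1' : t < 1 := lt_of_le_of_lt htp h
    set g : ℝ → ℝ := fun u => Real.log (1+p*u) + p * Real.log (1-u)
      - Real.log (1-p*u) - p * Real.log (1+u) with hg
    set g' : ℝ → ℝ := fun u => p/(1+p*u) - p/(1-u) + p/(1-p*u) - p/(1+u) with hg'
    have key : ∀ u ∈ Set.Icc (0:ℝ) t, HasDerivAt g (g' u) u := by
      intro u hu
      obtain ⟨hu0, hut⟩ := hu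
      have hpu : p*u < 1 := lt_of_le_of_lt (by nlinarith) h
      have hA : (0:ℝ) < 1 + p*u := by nlinarith
      have hB : (0:ℝ) < 1 - p*u := by linarith
      have hC : (0:ℝ) < 1 - u := by nlinarith
      have hD : (0:ℝ) < 1 + u := by linarith
      have d1 : HasDerivAt (fun u : ℝ => 1+p*u) p u := by
        simpa using ((hasDerivAt_id u).const_mul p).const_add 1
      have d2 : HasDerivAt (fun u : ℝ => 1-u) (-1) u := by
        simpa [sub_eq_add_neg] using ((hasDerivAt_id u).const_mul (-1)).const_add 1
      have d3 : HasDerivAt (fun u : ℝ => 1-p*u) (-p) u := by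
        simpa [sub_eq_add_neg] using ((hasDerivAt_id u).const_mul (-p)).const_add 1
      have d4 : HasDerivAt (fun u : ℝ => 1+u) 1 u := by
        simpa using ((hasDerivAt_id u).const_mul 1).const_add 1
      have l1 := d1.log (ne_of_gt hA)
      have l2 := (d2.log (ne_of_gt hC)).const_mul p
      have l3 := d3.log (ne_of_gt hB)
      have l4 := (d4.log (ne_of_gt hD)).const_mul p
      have := ((l1.add l2).sub l3).sub l4
      convert this using 1 <;> try rfl
      simp only [g']
      ring
    have mono : MonotoneOn g (Set.Icc (0:ℝ) t) := by
      apply monotoneOn_of_hasDerivWithinAt_nonneg (convex_Icc 0 t)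
        (fun u hu => (key u hu).continuousAt.continuousWithinAt)
        (fun u hu => (key u (interior_subset hu)).hasDerivWithinAt)
      intro u hu
      rw [interior_Icc] at hu
      obtain ⟨hu0, hut⟩ := hu
      have hpu : p*u < 1 := lt_of_le_of_lt (by nlinarith) h
      have hA : (0:ℝ) < 1 + p*u := by nlinarith
      have hB : (0:ℝ) < 1 - p*u := by linarith
      have hC : (0:ℝ) < 1 - u := by nlinarith
      have hD : (0:ℝ) < 1 + u := by linarith
      have e1 : p/(1+p*u) + p/(1-p*u) = 2*p/((1+p*u)*(1-p*u)) := by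
        field_simp; ring
      have e2 : p/(1-u) + p/(1+u) = 2*p/((1-u)*(1+u)) := by
        field_simp; ring
      have hprod1 : (0:ℝ) < (1+p*u)*(1-p*u) := mul_pos hA hB
      have hprod2 : (0:ℝ) < (1-u)*(1+u) := mul_pos hC hD
      have hle : (1+p*u)*(1-p*u) ≤ (1-u)*(1+u) := by
        have hpp : (0:ℝ) ≤ p^2 - 1 := by nlinarith
        nlinarith [mul_nonneg (mul_nonneg hu0.le hu0.le) hpp]
      have : 2*p/((1-u)*(1+u)) ≤ 2*p/((1+p*u)*(1-p*u)) :=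
        div_le_div_of_nonneg_left (by linarith) hprod1 hle
      simp only [hg']
      linarith [e1, e2, this]
    have h0 : g 0 = 0 := by simp [hg]
    have hgt : 0 ≤ g t := by
      have := mono (Set.left_mem_Icc.2 ht0) (Set.right_mem_Icc.2 ht0) ht0
      rwa [h0] at this
    -- translate g t ≥ 0 to the inequality
    have hB : (0:ℝ) < 1 - p*t := by linarith
    have hA : (0:ℝ) < 1 + p*t := by nlinarith
    have hC : (0:ℝ) < 1 - t := by linarith
    have hD : (0:ℝ) < 1 + t := by linarith
    have e1 : g t = Real.log ((1+p*t)*(1-t)^p) - Real.log ((1-p*t)*(1+t)^p) := by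
      rw [Real.log_mul (ne_of_gt hA) (ne_of_gt (rpow_pos_of_pos hC p)),
        Real.log_mul (ne_of_gt hB) (ne_of_gt (rpow_pos_of_pos hD p)),
        Real.log_rpow hC, Real.log_rpow hD]
      simp [hg]; ring
    have := hgt
    rw [e1, sub_nonneg] at this
    have := Real.exp_le_exp.2 this
    rwa [Real.exp_log (mul_pos hB (rpow_pos_of_pos hD p)),
      Real.exp_log (mul_pos hA (rpow_pos_of_pos hC p))] at this





lemma core_ineq {q t : ℝ} (hq : 2 ≤ q) (ht0 : 0 ≤ t) (ht1 : t ≤ 1) :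
    (1+t)^q + (1-t)^q ≤ 2 * (1 + (q-1)*t^2)^(q/2) := by
  have hq1 : (1:ℝ) ≤ q - 1 := by linarith
  have hq0 : (0:ℝ) < q := by linarith
  set G : ℝ → ℝ := fun t => (1+t)^q + (1-t)^q with hGdef
  have hGpos : ∀ u ∈ Set.Icc (0:ℝ) 1, 0 < G u := by
    intro u hu
    obtain ⟨h0, h1⟩ := hu
    have : (1:ℝ) ≤ (1+u)^q := by
      calc (1:ℝ) = 1 ^ q := (Real.one_rpow q).symm
      _ ≤ (1+u)^q := Real.rpow_le_rpow zero_le_one (by linarith) (le_of_lt hq0)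
    have h2 : (0:ℝ) ≤ (1-u)^q := Real.rpow_nonneg (by linarith) q
    simp only [hGdef]
    linarith
  have hXpos : ∀ u : ℝ, 0 ≤ u → (0:ℝ) < 1 + (q-1)*u^2 := by
    intro u hu; nlinarith
  set F : ℝ → ℝ := fun t => q/2 * Real.log (1 + (q-1)*t^2) + Real.log 2 - Real.log (G t)
    with hFdef
  set F' : ℝ → ℝ := fun t => q/2 * ((q-1)*(2*t))/(1+(q-1)*t^2)
    - (q*(1+t)^(q-1) - q*(1-t)^(q-1))/(G t) with hF'def
  have key : ∀ u ∈ Set.Icc (0:ℝ) 1, HasDerivAt F (F' u) u := by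
    intro u hu
    obtain ⟨h0, h1⟩ := hu
    have hX := hXpos u h0
    have hG := hGpos u ⟨h0, h1⟩
    have d1 : HasDerivAt (fun t : ℝ => 1 + (q-1)*t^2) ((q-1)*(2*u)) u := by
      have := ((hasDerivAt_pow 2 u).const_mul (q-1)).const_add 1
      simpa using this
    have l1 := (d1.log (ne_of_gt hX)).const_mul (q/2)
    have d2 : HasDerivAt (fun t : ℝ => 1+t) 1 u := by
      simpa using ((hasDerivAt_id u).const_mul 1).const_add 1
    have d3 : HasDerivAt (fun t : ℝ => 1-t) (-1) u := by
      simpa [sub_eq_add_neg] using ((hasDerivAt_id u).const_mul (-1)).const_add 1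
    have r2 : HasDerivAt (fun t : ℝ => (1+t)^q) (1 * q * (1+u)^(q-1)) u :=
      d2.rpow_const (Or.inr (by linarith))
    have r3 : HasDerivAt (fun t : ℝ => (1-t)^q) ((-1) * q * (1-u)^(q-1)) u :=
      d3.rpow_const (Or.inr (by linarith))
    have dG : HasDerivAt G (1 * q * (1+u)^(q-1) + (-1) * q * (1-u)^(q-1)) u := r2.add r3
    have lG := dG.log (ne_of_gt hG)
    have := (l1.add_const (Real.log 2)).sub lG
    convert this using 1 <;> try rfl
    simp only [F']
    ring
  have mono : MonotoneOn F (Set.Icc (0:ℝ) 1) := by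
    apply monotoneOn_of_hasDerivWithinAt_nonneg (convex_Icc 0 1)
      (fun u hu => (key u hu).continuousAt.continuousWithinAt)
      (fun u hu => (key u (interior_subset hu)).hasDerivWithinAt)
    intro u hu
    rw [interior_Icc] at hu
    obtain ⟨h0, h1⟩ := hu
    have hX := hXpos u (le_of_lt h0)
    have hG := hGpos u ⟨le_of_lt h0, le_of_lt h1⟩
    have h1p : (0:ℝ) < 1 + u := by linarith
    have h1m : (0:ℝ) < 1 - u := by linarith
    set a := (1+u)^(q-1) with ha
    set b := (1-u)^(q-1) with hb
    have hGexp : G u = (1+u)*a + (1-u)*b := by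
      simp only [hGdef, ha, hb]
      rw [← Real.rpow_one_add' (by linarith) (by linarith : 1 + (q-1) ≠ 0),
          ← Real.rpow_one_add' (by linarith) (by linarith : 1 + (q-1) ≠ 0)]
      norm_num
    have huv := aux_uv (p := q-1) hq1 (le_of_lt h0) (le_of_lt h1)
    -- (1 - (q-1)*u) * (1+u)^(q-1) ≤ (1 + (q-1)*u) * (1-u)^(q-1)
    have hkey : (q*a - q*b) * (1 + (q-1)*u^2) ≤ q/2*((q-1)*(2*u)) * G u := by
      rw [hGexp]
      nlinarith [mul_le_mul_of_nonneg_left huv (le_of_lt hq0)]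
    have : (q*a - q*b)/(G u) ≤ q/2*((q-1)*(2*u))/(1 + (q-1)*u^2) := by
      rw [div_le_div_iff₀ hG hX]
      exact hkey
    simp only [hF'def]
    linarith
  have hF0 : F 0 = 0 := by
    simp [hFdef, hGdef]
    norm_num
  have hFt : 0 ≤ F t := by
    have := mono (Set.left_mem_Icc.2 zero_le_one) ⟨ht0, ht1⟩ ht0
    rwa [hF0] at this
  have hX := hXpos t ht0
  have hG := hGpos t ⟨ht0, ht1⟩
  have : Real.log (G t) ≤ q/2 * Real.log (1 + (q-1)*t^2) + Real.log 2 := by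
    simp only [hFdef] at hFt; linarith
  have := Real.exp_le_exp.2 this
  rw [Real.exp_log hG, Real.exp_add, Real.exp_log (by norm_num : (0:ℝ) < 2)] at this
  calc G t ≤ Real.exp (q/2 * Real.log (1 + (q-1)*t^2)) * 2 := this
  _ = 2 * (1 + (q-1)*t^2)^(q/2) := by
      rw [Real.rpow_def_of_pos hX]
      ring_nf

lemma twopoint'' {q a c : ℝ} (hq : 2 ≤ q) (ha : 0 ≤ a) (hc : 0 ≤ c) (hca : c ≤ a) :
    (a+c)^q + (a-c)^q ≤ 2*(a^2+(q-1)*c^2)^(q/2) := by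
  have hq0 : (0:ℝ) < q := by linarith
  rcases eq_or_lt_of_le ha with h0 | h0
  · have hc0 : c = 0 := le_antisymm (h0 ▸ hca) hc
    subst hc0
    rw [← h0]
    norm_num
    rw [Real.zero_rpow (ne_of_gt hq0), Real.zero_rpow (by positivity)]
    norm_num
  · set t := c/a with htdef
    have ht0 : 0 ≤ t := div_nonneg hc (le_of_lt h0)
    have ht1 : t ≤ 1 := (div_le_one h0).2 hca
    have hcore := core_ineq hq ht0 ht1
    have haq : (0:ℝ) < a ^ q := Real.rpow_pos_of_pos h0 q
    have e1 : (a+c)^q = a^q * (1+t)^q := by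
      rw [← Real.mul_rpow (le_of_lt h0) (by linarith)]
      congr 1
      rw [htdef]
      field_simp
    have e2 : (a-c)^q = a^q * (1-t)^q := by
      rw [← Real.mul_rpow (le_of_lt h0) (by linarith)]
      congr 1
      rw [htdef]
      field_simp
    have e3 : (a^2+(q-1)*c^2)^(q/2) = a^q * (1+(q-1)*t^2)^(q/2) := by
      have h4 : a^2+(q-1)*c^2 = a^2 * (1+(q-1)*t^2) := by
        rw [htdef]
        field_simp
      have h5 : (0:ℝ) ≤ 1+(q-1)*t^2 := by nlinarith
      rw [h4, Real.mul_rpow (by positivity) h5]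
      congr 1
      rw [← Real.rpow_natCast a 2, ← Real.rpow_mul (le_of_lt h0)]
      congr 1
      push_cast
      ring
    rw [e1, e2, e3]
    calc a^q*(1+t)^q + a^q*(1-t)^q = a^q * ((1+t)^q + (1-t)^q) := by ring
    _ ≤ a^q * (2*(1+(q-1)*t^2)^(q/2)) := mul_le_mul_of_nonneg_left hcore (le_of_lt haq)
    _ = 2*(a^q * (1+(q-1)*t^2)^(q/2)) := by ring

lemma twopoint' {q : ℝ} (hq : 2 ≤ q) (a c : ℝ) :
    |a+c|^q + |a-c|^q ≤ 2*(a^2+(q-1)*c^2)^(q/2) := by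
  have habs : |a+c|^q + |a-c|^q = (|a|+|c|)^q + |(|a|-|c|)|^q := by
    rcases le_or_gt 0 a with ha | ha <;> rcases le_or_gt 0 c with hc | hc
    · rw [abs_of_nonneg ha, abs_of_nonneg hc, abs_of_nonneg (add_nonneg ha hc)]
    · have h1 : |a+c| = |(|a|-|c|)| := by
        rw [abs_of_nonneg ha, abs_of_neg hc]
        congr 1
        ring
      have h2 : |a-c| = |a|+|c| := by
        rw [abs_of_nonneg ha, abs_of_neg hc, abs_of_nonneg (by linarith : (0:ℝ) ≤ a - c)]
        ring
      rw [h1, h2]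
      ring
    · have h1 : |a+c| = |(|a|-|c|)| := by
        rw [abs_of_neg ha, abs_of_nonneg hc, ← abs_neg]
        congr 1
        ring
      have h2 : |a-c| = |a|+|c| := by
        rw [abs_of_neg ha, abs_of_nonneg hc, abs_of_nonpos (by linarith : a - c ≤ 0)]
        ring
      rw [h1, h2]
      ring
    · have h1 : |a+c| = |a|+|c| := by
        rw [abs_of_neg ha, abs_of_neg hc, abs_of_neg (by linarith : a + c < 0)]
        ring
      have h2 : |a-c| = |(|a|-|c|)| := by
        rw [abs_of_neg ha, abs_of_neg hc, ← abs_neg]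
        congr 1
        ring
      rw [h1, h2]
  rw [habs, ← sq_abs a, ← sq_abs c]
  set A := |a| with hA
  set C := |c| with hC
  have hA0 : 0 ≤ A := abs_nonneg a
  have hC0 : 0 ≤ C := abs_nonneg c
  rcases le_or_gt C A with hle | hlt
  · rw [abs_of_nonneg (sub_nonneg.2 hle)]
    exact twopoint'' hq hA0 hC0 hle
  · rw [abs_of_neg (sub_neg.2 hlt)]
    have h1 : (A+C)^q + (-(A-C))^q = (C+A)^q + (C-A)^q := by
      rw [add_comm A C]
      congr 2
      ring
    rw [h1]
    calc (C+A)^q + (C-A)^q ≤ 2*(C^2+(q-1)*A^2)^(q/2) :=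
          twopoint'' hq hC0 hA0 (le_of_lt hlt)
    _ ≤ 2*(A^2+(q-1)*C^2)^(q/2) := by
        have h2 : C^2+(q-1)*A^2 ≤ A^2+(q-1)*C^2 := by
          have hq2 : (0:ℝ) ≤ q - 2 := by linarith
          have hsq : A^2 ≤ C^2 := by nlinarith
          nlinarith [mul_nonneg hq2 (sub_nonneg.2 hsq)]
        have h3 : (0:ℝ) ≤ C^2+(q-1)*A^2 := by nlinarith
        have := Real.rpow_le_rpow h3 h2 (by positivity : (0:ℝ) ≤ q/2)
        linarith

lemma twopoint {q r a b : ℝ} (hq : 2 ≤ q) (hr : r^2*(q-1) ≤ 1) :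
    |a+r*b|^q + |a-r*b|^q ≤ 2*(a^2+b^2)^(q/2) := by
  have h1 := twopoint' hq a (r*b)
  have h2 : a^2 + (q-1)*(r*b)^2 ≤ a^2 + b^2 := by
    nlinarith [mul_le_mul_of_nonneg_right hr (sq_nonneg b), sq_nonneg (r*b)]
  have h3 : (0:ℝ) ≤ a^2 + (q-1)*(r*b)^2 := by nlinarith [sq_nonneg (r*b), sq_nonneg a]
  calc |a+r*b|^q + |a-r*b|^q ≤ 2*(a^2+(q-1)*(r*b)^2)^(q/2) := h1
  _ ≤ 2*(a^2+b^2)^(q/2) := by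
      have := Real.rpow_le_rpow h3 h2 (by positivity : (0:ℝ) ≤ q/2)
      linarith

-- ### basic expectation lemmas

lemma sgn_mul_self (b : Bool) : sgn b * sgn b = 1 := by cases b <;> simp [sgn]

lemma sgn_not (b : Bool) : sgn (!b) = - sgn b := by cases b <;> simp [sgn]

lemma cubeExpect_nonneg {n : ℕ} {f : (Fin n → Bool) → ℝ} (h : ∀ x, 0 ≤ f x) :
    0 ≤ cubeExpect f :=
  div_nonneg (Finset.sum_nonneg fun x _ => h x) (by positivity)

lemma cubeExpect_mono {n : ℕ} {f g : (Fin n → Bool) → ℝ} (h : ∀ x, f x ≤ g x) :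
    cubeExpect f ≤ cubeExpect g :=
  div_le_div_of_nonneg_right (Finset.sum_le_sum fun x _ => h x) (by positivity)

lemma cubeExpect_add {n : ℕ} (f g : (Fin n → Bool) → ℝ) :
    cubeExpect (fun x => f x + g x) = cubeExpect f + cubeExpect g := by
  unfold cubeExpect
  rw [Finset.sum_add_distrib, add_div]

lemma cubeExpect_const_mul {n : ℕ} (c : ℝ) (f : (Fin n → Bool) → ℝ) :
    cubeExpect (fun x => c * f x) = c * cubeExpect f := by
  unfold cubeExpect
  rw [← Finset.mul_sum, mul_div_assoc]

lemma cubeExpect_sum {n : ℕ} {ι : Type*} (A : Finset ι) (g : ι → (Fin n → Bool) → ℝ) :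
    cubeExpect (fun x => ∑ s ∈ A, g s x) = ∑ s ∈ A, cubeExpect (g s) := by
  unfold cubeExpect
  rw [← Finset.sum_div]
  congr 1
  rw [Finset.sum_comm]

lemma cubeExpect_congr {n : ℕ} {f g : (Fin n → Bool) → ℝ} (h : ∀ x, f x = g x) :
    cubeExpect f = cubeExpect g := by
  unfold cubeExpect; congr 1; exact Finset.sum_congr rfl fun x _ => h x

-- ### orthogonality

lemma expect_chi {n : ℕ} (U : Finset (Fin n)) :
    cubeExpect (chi U) = if U = ∅ then 1 else 0 := by
  rcases eq_or_ne U ∅ with h | h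
  · subst h
    simp only [if_pos rfl]
    unfold cubeExpect chi
    simp only [Finset.prod_empty]
    rw [Finset.sum_const, Finset.card_univ]
    have : Fintype.card (Fin n → Bool) = 2 ^ n := by
      simp [Fintype.card_fun]
    rw [this]
    simp
  · rw [if_neg h]
    obtain ⟨i0, hi0⟩ := Finset.nonempty_iff_ne_empty.2 h
    have hinv : Function.Involutive
        (fun x : Fin n → Bool => Function.update x i0 (!(x i0))) := by
      intro x
      funext j
      rcases eq_or_ne j i0 with rfl | hj
      · simp
      · simp [Function.update_of_ne hj]
    set σ := hinv.toPerm
    have hflip : ∀ x : Fin n → Bool, chi U (σ x) = - chi U x := by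
      intro x
      unfold chi
      rw [← Finset.mul_prod_erase U _ hi0, ← Finset.mul_prod_erase U (fun i => sgn (x i)) hi0]
      have h1 : sgn (σ x i0) = - sgn (x i0) := by
        show sgn (Function.update x i0 (!(x i0)) i0) = _
        rw [Function.update_self, sgn_not]
      have h2 : ∀ j ∈ U.erase i0, sgn (σ x j) = sgn (x j) := by
        intro j hj
        have : j ≠ i0 := Finset.ne_of_mem_erase hj
        show sgn (Function.update x i0 (!(x i0)) j) = _
        rw [Function.update_of_ne this]
      rw [h1, Finset.prod_congr rfl h2]
      ring
    have hsum : ∑ x : Fin n → Bool, chi U x = 0 := by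
      have h1 : ∑ x : Fin n → Bool, chi U x = ∑ x : Fin n → Bool, chi U (σ x) :=
        (Equiv.sum_comp σ (chi U)).symm
      have h2 : ∑ x : Fin n → Bool, chi U (σ x) = - ∑ x : Fin n → Bool, chi U x := by
        rw [← Finset.sum_neg_distrib]
        exact Finset.sum_congr rfl fun x _ => hflip x
      linarith [h1.trans h2]
    unfold cubeExpect
    rw [hsum]
    simp

lemma chi_mul_chi {n : ℕ} (S T : Finset (Fin n)) (x : Fin n → Bool) :
    chi S x * chi T x = chi (symmDiff S T) x := by
  classical
  unfold chi
  rw [← Finset.prod_union_inter (s₁ := S) (s₂ := T)]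
  have h1 : ∏ i ∈ S ∩ T, sgn (x i) * sgn (x i) = 1 := by
    rw [Finset.prod_congr rfl (fun i _ => sgn_mul_self (x i))]
    exact Finset.prod_const_one
  have h2 : S ∪ T = symmDiff S T ∪ (S ∩ T) := by
    ext i
    simp only [Finset.mem_union, Finset.mem_inter, Finset.mem_symmDiff]
    tauto
  have h3 : Disjoint (symmDiff S T) (S ∩ T) := by
    rw [Finset.disjoint_left]
    intro i hi
    rw [Finset.mem_symmDiff] at hi
    simp only [Finset.mem_inter]
    tauto
  calc (∏ i ∈ S ∪ T, sgn (x i)) * ∏ i ∈ S ∩ T, sgn (x i)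
      = (∏ i ∈ symmDiff S T ∪ (S ∩ T), sgn (x i)) * ∏ i ∈ S ∩ T, sgn (x i) := by rw [← h2]
    _ = ((∏ i ∈ symmDiff S T, sgn (x i)) * ∏ i ∈ S ∩ T, sgn (x i)) * ∏ i ∈ S ∩ T, sgn (x i) := by
        rw [Finset.prod_union h3]
    _ = (∏ i ∈ symmDiff S T, sgn (x i)) * ∏ i ∈ S ∩ T, (sgn (x i) * sgn (x i)) := by
        rw [Finset.prod_mul_distrib]; ring
    _ = ∏ i ∈ symmDiff S T, sgn (x i) := by rw [h1, mul_one]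

lemma expect_chi_mul_chi {n : ℕ} (S T : Finset (Fin n)) :
    cubeExpect (fun x => chi S x * chi T x) = if S = T then 1 else 0 := by
  rw [cubeExpect_congr (fun x => chi_mul_chi S T x), expect_chi]
  congr 1
  simp [symmDiff_eq_bot]

-- ### Fourier facts

lemma fourierCoef_noiseOp {n : ℕ} (r : ℝ) (f : (Fin n → Bool) → ℝ) (T : Finset (Fin n)) :
    fourierCoef (noiseOp r f) T = r ^ T.card * fourierCoef f T := by
  have h1 : ∀ x, noiseOp r f x * chi T x
      = ∑ S : Finset (Fin n), (r ^ S.card * fourierCoef f S) * (chi S x * chi T x) := by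
    intro x
    show (∑ S : Finset (Fin n), r ^ S.card * fourierCoef f S * chi S x) * chi T x = _
    rw [Finset.sum_mul]
    exact Finset.sum_congr rfl fun S _ => by ring
  have h2 : ∀ S : Finset (Fin n),
      cubeExpect (fun x => (r ^ S.card * fourierCoef f S) * (chi S x * chi T x))
      = if S = T then r ^ S.card * fourierCoef f S else 0 := by
    intro S
    rw [cubeExpect_const_mul, expect_chi_mul_chi, mul_ite, mul_one, mul_zero]
  show cubeExpect (fun x => noiseOp r f x * chi T x) = _
  rw [cubeExpect_congr h1, cubeExpect_sum, Finset.sum_congr rfl fun S _ => h2 S,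
    Finset.sum_ite_eq' Finset.univ T (fun S => r ^ S.card * fourierCoef f S)]
  simp

lemma noiseOp_noiseOp {n : ℕ} (r s : ℝ) (f : (Fin n → Bool) → ℝ) :
    noiseOp r (noiseOp s f) = noiseOp (r * s) f := by
  funext x
  show ∑ S : Finset (Fin n), r ^ S.card * fourierCoef (noiseOp s f) S * chi S x
      = ∑ S : Finset (Fin n), (r*s) ^ S.card * fourierCoef f S * chi S x
  refine Finset.sum_congr rfl fun S _ => ?_
  rw [fourierCoef_noiseOp s f S, mul_pow]
  ring

lemma expect_noise_mul_noise {n : ℕ} (r r' : ℝ) (f : (Fin n → Bool) → ℝ) :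
    cubeExpect (fun x => noiseOp r f x * noiseOp r' f x)
      = ∑ S : Finset (Fin n), r ^ S.card * r' ^ S.card * (fourierCoef f S)^2 := by
  have h1 : ∀ x, noiseOp r f x * noiseOp r' f x
      = ∑ S : Finset (Fin n), ∑ T : Finset (Fin n),
        ((r ^ S.card * fourierCoef f S) * (r' ^ T.card * fourierCoef f T))
          * (chi S x * chi T x) := by
    intro x
    show (∑ S : Finset (Fin n), r ^ S.card * fourierCoef f S * chi S x)
        * (∑ T : Finset (Fin n), r' ^ T.card * fourierCoef f T * chi T x) = _
    rw [Finset.sum_mul_sum]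
    exact Finset.sum_congr rfl fun S _ => Finset.sum_congr rfl fun T _ => by ring
  have h2 : ∀ S T : Finset (Fin n),
      cubeExpect (fun x => ((r ^ S.card * fourierCoef f S) * (r' ^ T.card * fourierCoef f T))
        * (chi S x * chi T x))
      = if S = T then (r ^ S.card * fourierCoef f S) * (r' ^ T.card * fourierCoef f T)
        else 0 := by
    intro S T
    rw [cubeExpect_const_mul, expect_chi_mul_chi, mul_ite, mul_one, mul_zero]
  rw [cubeExpect_congr h1, cubeExpect_sum]
  refine Finset.sum_congr rfl fun S _ => ?_
  rw [cubeExpect_sum, Finset.sum_congr rfl fun T _ => h2 S T,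
    Finset.sum_ite_eq Finset.univ S
      (fun T => (r ^ S.card * fourierCoef f S) * (r' ^ T.card * fourierCoef f T))]
  simp
  ring

-- ### kernel representation

def kerOp {n : ℕ} (r : ℝ) (f : (Fin n → Bool) → ℝ) (x : Fin n → Bool) : ℝ :=
  cubeExpect fun y => f y * ∏ i, (1 + r * sgn (x i) * sgn (y i))

lemma prod_one_add {n : ℕ} (a : Fin n → ℝ) :
    ∏ i, (1 + a i) = ∑ S : Finset (Fin n), ∏ i ∈ S, a i := by
  have h1 : ∀ i : Fin n, (1 : ℝ) + a i = a i + 1 := fun i => add_comm 1 (a i)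
  rw [Finset.prod_congr rfl fun i _ => h1 i, Finset.prod_add]
  rw [Finset.powerset_univ]
  exact Finset.sum_congr rfl fun S _ => by simp

lemma ker_expand {n : ℕ} (r : ℝ) (x y : Fin n → Bool) :
    ∏ i, (1 + r * sgn (x i) * sgn (y i))
      = ∑ S : Finset (Fin n), r ^ S.card * chi S x * chi S y := by
  rw [prod_one_add (fun i => r * sgn (x i) * sgn (y i))]
  refine Finset.sum_congr rfl fun S _ => ?_
  unfold chi
  rw [Finset.prod_mul_distrib, Finset.prod_mul_distrib, Finset.prod_const]

lemma noiseOp_eq_ker {n : ℕ} (r : ℝ) (f : (Fin n → Bool) → ℝ) :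
    noiseOp r f = kerOp r f := by
  funext x
  unfold kerOp
  rw [cubeExpect_congr (g := fun y => ∑ S : Finset (Fin n),
      (r ^ S.card * chi S x) * (f y * chi S y))
    (fun y => by
      rw [ker_expand, Finset.mul_sum]
      exact Finset.sum_congr rfl fun S _ => by ring)]
  rw [cubeExpect_sum]
  show noiseOp r f x = _
  unfold noiseOp
  refine Finset.sum_congr rfl fun S _ => ?_
  rw [cubeExpect_const_mul]
  show r ^ S.card * fourierCoef f S * chi S x
      = r ^ S.card * chi S x * fourierCoef f S
  ring

lemma noiseOp_one {n : ℕ} (f : (Fin n → Bool) → ℝ) : noiseOp 1 f = f := by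
  rw [noiseOp_eq_ker]
  funext x
  unfold kerOp cubeExpect
  have h1 : ∀ y : Fin n → Bool,
      f y * ∏ i, (1 + 1 * sgn (x i) * sgn (y i))
        = if y = x then f y * 2^n else 0 := by
    intro y
    rcases eq_or_ne y x with rfl | hyx
    · rw [if_pos rfl]
      have : ∀ i : Fin n, (1 : ℝ) + 1 * sgn (y i) * sgn (y i) = 2 := by
        intro i
        rw [one_mul, sgn_mul_self]
        norm_num
      rw [Finset.prod_congr rfl fun i _ => this i, Finset.prod_const]
      simp
    · rw [if_neg hyx]
      obtain ⟨i, hi⟩ := Function.ne_iff.1 hyx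
      have : (1 : ℝ) + 1 * sgn (x i) * sgn (y i) = 0 := by
        cases hx : x i <;> cases hy : y i <;> simp [sgn, hx, hy] at hi ⊢ <;> norm_num
      rw [Finset.prod_eq_zero (Finset.mem_univ i) (by rw [one_mul] at this ⊢; rw [this])]
      ring
  rw [Finset.sum_congr rfl fun y _ => h1 y, Finset.sum_ite_eq' Finset.univ x (fun y => f y * 2^n)]
  simp

-- ### splitting off one coordinate

lemma cube_sum_succ {n : ℕ} (g : (Fin (n+1) → Bool) → ℝ) :
    ∑ z : Fin (n+1) → Bool, g z
      = ∑ x : Fin n → Bool, g (Fin.cons true x) + ∑ x : Fin n → Bool, g (Fin.cons false x) := by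
  rw [← Equiv.sum_comp (Fin.consEquiv (fun _ : Fin (n+1) => Bool)) g]
  rw [Fintype.sum_prod_type]
  rw [Fintype.univ_bool, Finset.sum_insert (by simp), Finset.sum_singleton]
  rfl

lemma cubeExpect_succ {n : ℕ} (g : (Fin (n+1) → Bool) → ℝ) :
    cubeExpect g = (cubeExpect (fun x => g (Fin.cons true x))
      + cubeExpect (fun x => g (Fin.cons false x))) / 2 := by
  unfold cubeExpect
  rw [cube_sum_succ, pow_succ]
  field_simp

lemma kerOp_cons {n : ℕ} (r : ℝ) (f : (Fin (n+1) → Bool) → ℝ) (b : Bool) (x : Fin n → Bool) :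
    kerOp r f (Fin.cons b x)
      = kerOp r (fun y => (f (Fin.cons true y) + f (Fin.cons false y))/2) x
        + r * sgn b * kerOp r (fun y => (f (Fin.cons true y) - f (Fin.cons false y))/2) x := by
  unfold kerOp
  rw [cubeExpect_succ]
  have hK : ∀ (c : Bool) (y : Fin n → Bool),
      (∏ i : Fin (n+1), (1 + r * sgn ((Fin.cons b x : Fin (n+1) → Bool) i)
          * sgn ((Fin.cons c y : Fin (n+1) → Bool) i)))
        = (1 + r * sgn b * sgn c) * ∏ i : Fin n, (1 + r * sgn (x i) * sgn (y i)) := by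
    intro c y
    rw [Fin.prod_univ_succ]
    simp [Fin.cons_zero, Fin.cons_succ]
  have e1 : ∀ c : Bool, cubeExpect (fun y => f (Fin.cons c y)
        * ∏ i : Fin (n+1), (1 + r * sgn ((Fin.cons b x : Fin (n+1) → Bool) i)
          * sgn ((Fin.cons c y : Fin (n+1) → Bool) i)))
      = (1 + r * sgn b * sgn c) * cubeExpect (fun y => f (Fin.cons c y)
          * ∏ i : Fin n, (1 + r * sgn (x i) * sgn (y i))) := by
    intro c
    rw [← cubeExpect_const_mul]
    exact cubeExpect_congr fun y => by rw [hK c y]; ring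
  rw [e1 true, e1 false]
  set P := cubeExpect (fun y => f (Fin.cons true y)
    * ∏ i : Fin n, (1 + r * sgn (x i) * sgn (y i))) with hP
  set Q := cubeExpect (fun y => f (Fin.cons false y)
    * ∏ i : Fin n, (1 + r * sgn (x i) * sgn (y i))) with hQ
  have e2 : cubeExpect (fun y => (f (Fin.cons true y) + f (Fin.cons false y))/2
        * ∏ i : Fin n, (1 + r * sgn (x i) * sgn (y i)))
      = (1/2) * P + (1/2) * Q := by
    rw [hP, hQ, ← cubeExpect_const_mul, ← cubeExpect_const_mul, ← cubeExpect_add]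
    exact cubeExpect_congr fun y => by ring
  have e3 : cubeExpect (fun y => (f (Fin.cons true y) - f (Fin.cons false y))/2
        * ∏ i : Fin n, (1 + r * sgn (x i) * sgn (y i)))
      = (1/2) * P + (-(1/2)) * Q := by
    rw [hP, hQ, ← cubeExpect_const_mul, ← cubeExpect_const_mul, ← cubeExpect_add]
    exact cubeExpect_congr fun y => by ring
  rw [e2, e3]
  cases b <;> simp [sgn] <;> ring

-- ### Minkowski-type step

lemma rpow_sq_abs (a : ℝ) {q : ℝ} (hq : 0 < q) : ((a^2 : ℝ))^(q/2) = |a|^q := by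
  rw [← sq_abs, ← Real.rpow_natCast |a| 2, ← Real.rpow_mul (abs_nonneg a)]
  congr 1
  push_cast
  ring

lemma expect_minkowski {n : ℕ} {q : ℝ} (hq : 2 ≤ q) (A B : (Fin n → Bool) → ℝ) :
    cubeExpect (fun x => ((A x)^2 + (B x)^2)^(q/2)) ≤
      ((cubeExpect fun x => |A x|^q)^(2/q) + (cubeExpect fun x => |B x|^q)^(2/q))^(q/2) := by
  have hq0 : (0:ℝ) < q := by linarith
  have hs : (1:ℝ) ≤ q/2 := by linarith
  set N : ℝ := 2^n with hN
  have hN0 : (0:ℝ) < N := by positivity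
  set S := ∑ x : Fin n → Bool, ((A x)^2 + (B x)^2)^(q/2) with hSdef
  set SA := ∑ x : Fin n → Bool, |A x|^q with hSA
  set SB := ∑ x : Fin n → Bool, |B x|^q with hSB
  have hSnn : 0 ≤ S := Finset.sum_nonneg fun x _ => Real.rpow_nonneg (by positivity) _
  have hSAnn : 0 ≤ SA := Finset.sum_nonneg fun x _ => Real.rpow_nonneg (abs_nonneg _) _
  have hSBnn : 0 ≤ SB := Finset.sum_nonneg fun x _ => Real.rpow_nonneg (abs_nonneg _) _
  have hmink : S^(2/q) ≤ SA^(2/q) + SB^(2/q) := by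
    have h := Real.Lp_add_le Finset.univ (fun x => (A x)^2) (fun x => (B x)^2) hs
    have e1 : ∀ x : Fin n → Bool, |(A x)^2 + (B x)^2|^(q/2) = ((A x)^2 + (B x)^2)^(q/2) := by
      intro x
      rw [abs_of_nonneg (by positivity)]
    have e2 : ∀ a : ℝ, |a^2|^(q/2) = |a|^q := by
      intro a
      rw [abs_of_nonneg (sq_nonneg a), rpow_sq_abs a hq0]
    simp only [e1, e2] at h
    have einv : (1:ℝ)/(q/2) = 2/q := by
      field_simp
    rw [einv] at h
    exact h
  -- divide by N
  have hdiv : (S/N)^(2/q) ≤ (SA/N)^(2/q) + (SB/N)^(2/q) := by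
    rw [div_rpow hSnn (le_of_lt hN0), div_rpow hSAnn (le_of_lt hN0),
      div_rpow hSBnn (le_of_lt hN0), ← add_div]
    exact div_le_div_of_nonneg_right hmink (by positivity)
  have hfin : S/N ≤ ((SA/N)^(2/q) + (SB/N)^(2/q))^(q/2) := by
    have h1 : ((S/N)^(2/q))^(q/2) ≤ ((SA/N)^(2/q) + (SB/N)^(2/q))^(q/2) :=
      Real.rpow_le_rpow (Real.rpow_nonneg (by positivity) _) hdiv (by positivity)
    rwa [← Real.rpow_mul (by positivity), div_mul_div_comm,
      show (2:ℝ)*q = q*2 from mul_comm 2 q, div_self (by positivity : q*2 ≠ 0),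
      Real.rpow_one] at h1
  exact hfin

-- ### the induction

lemma rpow_half_cancel {q X : ℝ} (hq : 0 < q) (hX : 0 ≤ X) : ((X^(q/2))^(2/q)) = X := by
  rw [← Real.rpow_mul hX]
  rw [show q/2*(2/q) = 1 by field_simp, Real.rpow_one]

lemma ker_hc {q r : ℝ} (hq : 2 ≤ q) (hr : r^2*(q-1) ≤ 1) :
    ∀ (n : ℕ) (f : (Fin n → Bool) → ℝ),
      cubeExpect (fun x => |kerOp r f x| ^ q) ≤ (cubeExpect fun x => (f x)^2) ^ (q/2) := by
  have hq0 : (0:ℝ) < q := by linarith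
  intro n
  induction n with
  | zero =>
    intro f
    have huniq : ∀ g : (Fin 0 → Bool) → ℝ, cubeExpect g = g default := by
      intro g
      unfold cubeExpect
      rw [Finset.univ_unique, Finset.sum_singleton]
      norm_num
      exact congrArg g (Subsingleton.elim _ _)
    have hker : kerOp r f default = f default := by
      unfold kerOp
      rw [huniq]
      simp
    rw [huniq (fun x => |kerOp r f x|^q), huniq (fun x => (f x)^2), hker, rpow_sq_abs _ hq0]
  | succ n ih =>
    intro f
    set f0 : (Fin n → Bool) → ℝ := fun y => (f (Fin.cons true y) + f (Fin.cons false y))/2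
      with hf0
    set f1 : (Fin n → Bool) → ℝ := fun y => (f (Fin.cons true y) - f (Fin.cons false y))/2
      with hf1
    set A := kerOp r f0 with hA
    set B := kerOp r f1 with hB
    have hsplit : cubeExpect (fun z => |kerOp r f z|^q)
        = (cubeExpect (fun x => |A x + r * B x|^q)
          + cubeExpect (fun x => |A x - r * B x|^q))/2 := by
      rw [cubeExpect_succ]
      congr 1
      congr 1
      · exact cubeExpect_congr fun x => by
          rw [kerOp_cons]
          simp [sgn, hA, hB, hf0, hf1]
      · exact cubeExpect_congr fun x => by
          rw [kerOp_cons]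
          have : A x + r * sgn false * B x = A x - r * B x := by simp [sgn]; ring
          rw [this]
    have step1 : cubeExpect (fun z => |kerOp r f z|^q)
        ≤ cubeExpect (fun x => ((A x)^2 + (B x)^2)^(q/2)) := by
      rw [hsplit]
      have e : cubeExpect (fun x => ((A x)^2 + (B x)^2)^(q/2))
          = cubeExpect (fun x => ((A x)^2 + (B x)^2)^(q/2)) := rfl
      have hle : (cubeExpect (fun x => |A x + r * B x|^q)
            + cubeExpect (fun x => |A x - r * B x|^q))
          ≤ 2 * cubeExpect (fun x => ((A x)^2 + (B x)^2)^(q/2)) := by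
        rw [← cubeExpect_add, ← cubeExpect_const_mul]
        apply cubeExpect_mono
        intro x
        exact twopoint hq hr
      linarith
    have step2 := expect_minkowski hq A B
    have ihA := ih f0
    have ihB := ih f1
    have hEA : 0 ≤ cubeExpect (fun x => |A x|^q) :=
      cubeExpect_nonneg fun x => Real.rpow_nonneg (abs_nonneg _) _
    have hEB : 0 ≤ cubeExpect (fun x => |B x|^q) :=
      cubeExpect_nonneg fun x => Real.rpow_nonneg (abs_nonneg _) _
    have hEf0 : 0 ≤ cubeExpect (fun x => (f0 x)^2) := cubeExpect_nonneg fun x => sq_nonneg _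
    have hEf1 : 0 ≤ cubeExpect (fun x => (f1 x)^2) := cubeExpect_nonneg fun x => sq_nonneg _
    have hA2 : (cubeExpect (fun x => |A x|^q))^(2/q) ≤ cubeExpect (fun x => (f0 x)^2) := by
      have := Real.rpow_le_rpow hEA ihA (by positivity : (0:ℝ) ≤ 2/q)
      rwa [rpow_half_cancel hq0 hEf0] at this
    have hB2 : (cubeExpect (fun x => |B x|^q))^(2/q) ≤ cubeExpect (fun x => (f1 x)^2) := by
      have := Real.rpow_le_rpow hEB ihB (by positivity : (0:ℝ) ≤ 2/q)
      rwa [rpow_half_cancel hq0 hEf1] at this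
    have step3 : ((cubeExpect fun x => |A x|^q)^(2/q) + (cubeExpect fun x => |B x|^q)^(2/q))^(q/2)
        ≤ (cubeExpect (fun x => (f0 x)^2) + cubeExpect (fun x => (f1 x)^2))^(q/2) := by
      apply Real.rpow_le_rpow (by positivity) (add_le_add hA2 hB2) (by positivity)
    have step4 : cubeExpect (fun x => (f0 x)^2) + cubeExpect (fun x => (f1 x)^2)
        = cubeExpect (fun z => (f z)^2) := by
      rw [cubeExpect_succ (fun z => (f z)^2)]
      rw [← cubeExpect_add]
      have : ∀ x, (f0 x)^2 + (f1 x)^2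
          = ((fun x => (f (Fin.cons true x))^2) x + (fun x => (f (Fin.cons false x))^2) x)/2 := by
        intro x
        rw [hf0, hf1]
        ring
      rw [cubeExpect_congr this]
      rw [show (fun x => (((fun x => (f (Fin.cons true x))^2) x
          + (fun x => (f (Fin.cons false x))^2) x)/2))
        = fun x => (1/2) * ((f (Fin.cons true x))^2 + (f (Fin.cons false x))^2) from
          funext fun x => by ring]
      rw [cubeExpect_const_mul, cubeExpect_add]
      ring
    calc cubeExpect (fun z => |kerOp r f z|^q)
        ≤ cubeExpect (fun x => ((A x)^2 + (B x)^2)^(q/2)) := step1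
      _ ≤ ((cubeExpect fun x => |A x|^q)^(2/q)
            + (cubeExpect fun x => |B x|^q)^(2/q))^(q/2) := step2
      _ ≤ (cubeExpect (fun x => (f0 x)^2) + cubeExpect (fun x => (f1 x)^2))^(q/2) := step3
      _ = (cubeExpect fun z => (f z)^2)^(q/2) := by rw [step4]

lemma cubeNorm_two_eq {n : ℕ} (f : (Fin n → Bool) → ℝ) :
    cubeNorm 2 f = (cubeExpect fun x => (f x)^2)^((1:ℝ)/2) := by
  unfold cubeNorm
  congr 1
  exact cubeExpect_congr fun x => by
    rw [show ((2:ℝ)) = ((2:ℕ):ℝ) by norm_num, Real.rpow_natCast, sq_abs]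

lemma hc_main {n : ℕ} {q r : ℝ} (hq : 2 ≤ q) (hr : r^2*(q-1) ≤ 1)
    (f : (Fin n → Bool) → ℝ) :
    cubeNorm q (noiseOp r f) ≤ cubeNorm 2 f := by
  have hq0 : (0:ℝ) < q := by linarith
  have h := ker_hc hq hr n f
  rw [← noiseOp_eq_ker] at h
  have hE : 0 ≤ cubeExpect (fun x => |noiseOp r f x|^q) :=
    cubeExpect_nonneg fun x => Real.rpow_nonneg (abs_nonneg _) _
  have hEf : 0 ≤ cubeExpect (fun x => (f x)^2) := cubeExpect_nonneg fun x => sq_nonneg _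
  have h2 := Real.rpow_le_rpow hE h (by positivity : (0:ℝ) ≤ 1/q)
  rw [← Real.rpow_mul hEf, show q/2*(1/q) = 1/2 by field_simp] at h2
  rw [cubeNorm_two_eq]
  exact h2

-- ### Jensen: ‖g‖_q ≤ ‖g‖₂ for 1 < q ≤ 2

lemma cubeNorm_le_two {n : ℕ} {q : ℝ} (hq1 : 1 < q) (hq2 : q ≤ 2) (g : (Fin n → Bool) → ℝ) :
    cubeNorm q g ≤ cubeNorm 2 g := by
  have hq0 : (0:ℝ) < q := by linarith
  have key : cubeExpect (fun x => |g x|^q) ≤ (cubeExpect fun x => (g x)^2)^(q/2) := by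
    rcases eq_or_lt_of_le hq2 with h2 | h2
    · subst h2
      rw [show (2:ℝ)/2 = 1 by norm_num, Real.rpow_one]
      refine le_of_eq (cubeExpect_congr fun x => ?_)
      rw [show ((2:ℝ)) = ((2:ℕ):ℝ) by norm_num, Real.rpow_natCast, sq_abs]
    · have hpq : Real.HolderConjugate (2/q) (2/(2-q)) := by
        rw [Real.holderConjugate_iff]
        constructor
        · rw [lt_div_iff₀ hq0]
          linarith
        · rw [inv_div, inv_div]
          field_simp
          ring
      have h := Real.inner_le_Lp_mul_Lq Finset.univ (fun x => |g x|^q)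
        (fun _ : Fin n → Bool => (1:ℝ)) hpq
      simp only [mul_one, abs_one, Real.one_rpow] at h
      have e1 : ∀ x : Fin n → Bool, |(|g x|^q)|^((2:ℝ)/q) = (g x)^2 := by
        intro x
        rw [abs_of_nonneg (Real.rpow_nonneg (abs_nonneg _) _), ← Real.rpow_mul (abs_nonneg _),
          show q*(2/q) = 2 by field_simp, show ((2:ℝ)) = ((2:ℕ):ℝ) by norm_num,
          Real.rpow_natCast, sq_abs]
      simp only [e1] at h
      rw [Finset.sum_const, Finset.card_univ] at h
      have hcard : (Fintype.card (Fin n → Bool) : ℝ) = 2^n := by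
        simp [Fintype.card_fun]
      rw [nsmul_eq_mul, hcard, mul_one] at h
      -- h : ∑ |g|^q ≤ (∑ g²)^(1/(2/q)) * (2^n)^(1/(2/(2-q)))
      rw [one_div_div, one_div_div] at h
      -- now : ... ^ (q/2) * (2^n)^((2-q)/2)
      have hN : (0:ℝ) < (2:ℝ)^n := by positivity
      have hsum2 : (0:ℝ) ≤ ∑ x : Fin n → Bool, (g x)^2 :=
        Finset.sum_nonneg fun x _ => sq_nonneg _
      unfold cubeExpect
      rw [div_le_iff₀ hN] -- reduce to ∑|g|^q ≤ RHS * 2^n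
      calc ∑ x : Fin n → Bool, |g x|^q
          ≤ (∑ x : Fin n → Bool, (g x)^2)^(q/2) * ((2:ℝ)^n)^((2-q)/2) := h
        _ = ((∑ x : Fin n → Bool, (g x)^2) / 2^n)^(q/2) * 2^n := by
            have hA : ((2:ℝ)^n)^((2-q)/2) * ((2:ℝ)^n)^(q/2) = 2^n := by
              rw [← Real.rpow_add hN, show (2-q)/2 + q/2 = 1 by ring, Real.rpow_one]
            rw [Real.div_rpow hsum2 (le_of_lt hN), div_mul_eq_mul_div,
              eq_div_iff (ne_of_gt (Real.rpow_pos_of_pos hN _)), mul_assoc, hA]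
  -- conclude
  have hE : 0 ≤ cubeExpect (fun x => |g x|^q) :=
    cubeExpect_nonneg fun x => Real.rpow_nonneg (abs_nonneg _) _
  have hEf : 0 ≤ cubeExpect (fun x => (g x)^2) := cubeExpect_nonneg fun x => sq_nonneg _
  have h2 := Real.rpow_le_rpow hE key (by positivity : (0:ℝ) ≤ 1/q)
  rw [← Real.rpow_mul hEf, show q/2*(1/q) = 1/2 by field_simp] at h2
  rw [cubeNorm_two_eq]
  exact h2

-- ### Hölder interpolation on coefficients

lemma holder_interp {ι : Type*} (s : Finset ι) (w c : ι → ℝ) (hw : ∀ i, 0 ≤ w i)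
    (hc : ∀ i, 0 ≤ c i) {lam : ℝ} (h0 : 0 ≤ lam) (h1 : lam ≤ 1) :
    ∑ i ∈ s, (w i)^(1-lam) * c i
      ≤ (∑ i ∈ s, w i * c i)^(1-lam) * (∑ i ∈ s, c i)^lam := by
  rcases eq_or_lt_of_le h0 with rfl | hl0
  · simp only [sub_zero, Real.rpow_one, Real.rpow_zero, mul_one]
    exact le_of_eq rfl
  rcases eq_or_lt_of_le h1 with rfl | hl1
  · simp only [sub_self, Real.rpow_zero, one_mul, Real.rpow_one]
    exact le_of_eq rfl
  · have hpq : Real.HolderConjugate (1/(1-lam)) (1/lam) := by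
      rw [Real.holderConjugate_iff]
      constructor
      · rw [lt_div_iff₀ (by linarith)]
        linarith
      · rw [inv_div, inv_div]
        ring
    have h := Real.inner_le_Lp_mul_Lq s (fun i => (w i * c i)^(1-lam))
      (fun i => (c i)^lam) hpq
    have e0 : ∀ i, (w i * c i)^(1-lam) * (c i)^lam = (w i)^(1-lam) * c i := by
      intro i
      rw [Real.mul_rpow (hw i) (hc i), mul_assoc]
      congr 1
      rw [← Real.rpow_add' (hc i) (by norm_num : (1-lam) + lam ≠ 0),
        show (1-lam)+lam = 1 by ring, Real.rpow_one]
    have e1 : ∀ i, |(w i * c i)^(1-lam)|^((1:ℝ)/(1-lam)) = w i * c i := by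
      intro i
      rw [abs_of_nonneg (Real.rpow_nonneg (mul_nonneg (hw i) (hc i)) _),
        ← Real.rpow_mul (mul_nonneg (hw i) (hc i)),
        show (1-lam)*(1/(1-lam)) = 1 by
          rw [mul_one_div, div_self (by linarith : (1:ℝ)-lam ≠ 0)], Real.rpow_one]
    have e2 : ∀ i, |(c i)^lam|^((1:ℝ)/lam) = c i := by
      intro i
      rw [abs_of_nonneg (Real.rpow_nonneg (hc i) _), ← Real.rpow_mul (hc i),
        show lam*(1/lam) = 1 by
          rw [mul_one_div, div_self (ne_of_gt hl0)], Real.rpow_one]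
    simp only [e0, e1, e2] at h
    rw [one_div_one_div, one_div_one_div] at h
    exact h

lemma cubeNorm_nonneg {n : ℕ} (p : ℝ) (f : (Fin n → Bool) → ℝ) : 0 ≤ cubeNorm p f :=
  Real.rpow_nonneg (cubeExpect_nonneg fun x => Real.rpow_nonneg (abs_nonneg _) _) _


end ModHC

/-- **Modified hypercontractive inequality**: if `0 ≤ ρ ≤ 1`, `q > 1` and `0 ≤ λ ≤ 1`
satisfy `ρ^λ·√(q−1) ≤ 1` (real power, with `0^0 = 1`), then every `f : {-1,1}^n → ℝ`
satisfies `‖T_ρ f‖_q ≤ ‖T_ρ f‖₂^{1−λ}·‖f‖₂^λ`. -/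
theorem modified_hypercontractivity (n : ℕ) (hn : 1 ≤ n) (ρ q lam : ℝ)
    (hρ0 : 0 ≤ ρ) (hρ1 : ρ ≤ 1) (hq : 1 < q) (hlam0 : 0 ≤ lam) (hlam1 : lam ≤ 1)
    (hcond : ρ ^ lam * Real.sqrt (q - 1) ≤ 1) :
    ∀ f : (Fin n → Bool) → ℝ,
      cubeNorm q (noiseOp ρ f) ≤
        cubeNorm 2 (noiseOp ρ f) ^ (1 - lam) * cubeNorm 2 f ^ lam := by
  intro f
  set c : Finset (Fin n) → ℝ := fun S => (fourierCoef f S)^2 with hcdef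
  set w : Finset (Fin n) → ℝ := fun S => (ρ ^ S.card)^2 with hwdef
  have hcnn : ∀ S, 0 ≤ c S := fun S => sq_nonneg _
  have hwnn : ∀ S, 0 ≤ w S := fun S => sq_nonneg _
  have hw1 : ∀ S, w S ≤ 1 := by
    intro S
    have h1 : ρ ^ S.card ≤ 1 := pow_le_one₀ hρ0 hρ1
    have h0 : (0:ℝ) ≤ ρ ^ S.card := pow_nonneg hρ0 _
    show (ρ ^ S.card)^2 ≤ 1
    nlinarith
  have hEρ : cubeExpect (fun x => (noiseOp ρ f x)^2) = ∑ S : Finset (Fin n), w S * c S := by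
    rw [cubeExpect_congr
      (fun x => by ring : ∀ x, (noiseOp ρ f x)^2 = noiseOp ρ f x * noiseOp ρ f x)]
    rw [expect_noise_mul_noise]
    exact Finset.sum_congr rfl fun S _ => by rw [hwdef, hcdef]; ring
  have hEf : cubeExpect (fun x => (f x)^2) = ∑ S : Finset (Fin n), c S := by
    have h := expect_noise_mul_noise 1 1 f
    rw [noiseOp_one] at h
    rw [cubeExpect_congr (fun x => by ring : ∀ x, (f x)^2 = f x * f x)]
    rw [h]
    exact Finset.sum_congr rfl fun S _ => by rw [hcdef]; simp
  have hXnn : (0:ℝ) ≤ ∑ S : Finset (Fin n), w S * c S :=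
    Finset.sum_nonneg fun S _ => mul_nonneg (hwnn S) (hcnn S)
  have hYnn : (0:ℝ) ≤ ∑ S : Finset (Fin n), c S := Finset.sum_nonneg fun S _ => hcnn S
  have hcontr : cubeNorm 2 (noiseOp ρ f) ≤ cubeNorm 2 f := by
    rw [cubeNorm_two_eq, cubeNorm_two_eq]
    apply Real.rpow_le_rpow (cubeExpect_nonneg fun x => sq_nonneg _) _ (by norm_num)
    rw [hEρ, hEf]
    apply Finset.sum_le_sum
    intro S _
    nlinarith [hw1 S, hcnn S, hwnn S]
  rcases le_or_gt q 2 with hq2 | hq2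
  · -- easy case
    have h1 : cubeNorm q (noiseOp ρ f) ≤ cubeNorm 2 (noiseOp ρ f) := cubeNorm_le_two hq hq2 _
    have ha : 0 ≤ cubeNorm 2 (noiseOp ρ f) := cubeNorm_nonneg _ _
    have hb : 0 ≤ cubeNorm 2 f := cubeNorm_nonneg _ _
    refine h1.trans ?_
    rcases eq_or_lt_of_le ha with ha0 | ha0
    · rw [← ha0]
      exact mul_nonneg (Real.rpow_nonneg le_rfl _) (Real.rpow_nonneg hb _)
    · have e : cubeNorm 2 (noiseOp ρ f)
          = cubeNorm 2 (noiseOp ρ f)^(1-lam) * cubeNorm 2 (noiseOp ρ f)^lam := by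
        rw [← Real.rpow_add ha0, show 1-lam+lam = 1 by ring, Real.rpow_one]
      refine le_trans (le_of_eq e) ?_
      exact mul_le_mul_of_nonneg_left
        (Real.rpow_le_rpow (le_of_lt ha0) hcontr hlam0)
        (Real.rpow_nonneg (le_of_lt ha0) _)
  · -- hard case
    have hq2' : 2 ≤ q := le_of_lt hq2
    set r := ρ ^ lam with hrdef
    set s := ρ ^ (1-lam) with hsdef
    have hrnn : 0 ≤ r := Real.rpow_nonneg hρ0 _
    have hr2 : r^2*(q-1) ≤ 1 := by
      have hv : Real.sqrt (q-1) ^ 2 = q - 1 := Real.sq_sqrt (by linarith)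
      have hv0 : 0 ≤ Real.sqrt (q-1) := Real.sqrt_nonneg _
      nlinarith [mul_nonneg hrnn hv0, hcond]
    have hrs : r * s = ρ := by
      rw [hrdef, hsdef, ← Real.rpow_add' hρ0 (by norm_num : lam + (1-lam) ≠ 0),
        show lam + (1-lam) = 1 by ring, Real.rpow_one]
    have hstep1 : cubeNorm q (noiseOp ρ f) ≤ cubeNorm 2 (noiseOp s f) := by
      have h := hc_main (n := n) hq2' hr2 (noiseOp s f)
      rwa [noiseOp_noiseOp, hrs] at h
    have hwe : ∀ S : Finset (Fin n),
        s ^ S.card * s ^ S.card = (w S)^(1-lam) := by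
      intro S
      have hsk : s ^ S.card = ρ ^ ((1-lam) * (S.card:ℝ)) := by
        rw [hsdef, ← Real.rpow_natCast (ρ ^ (1-lam)) S.card, ← Real.rpow_mul hρ0]
      have hL : s ^ S.card * s ^ S.card
          = ρ ^ (((1-lam) * (S.card:ℝ)) * 2) := by
        rw [hsk, ← pow_two, ← Real.rpow_natCast (ρ ^ ((1-lam) * (S.card:ℝ))) 2,
          ← Real.rpow_mul hρ0]
        norm_num
      have hR : (w S)^(1-lam) = ρ ^ (((S.card:ℝ) * 2) * (1-lam)) := by
        rw [hwdef]
        show ((ρ ^ S.card)^2 : ℝ)^(1-lam) = _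
        rw [← Real.rpow_natCast ρ S.card, ← Real.rpow_natCast (ρ ^ ((S.card:ℕ):ℝ)) 2,
          ← Real.rpow_mul hρ0, ← Real.rpow_mul hρ0]
        norm_num
      rw [hL, hR]
      congr 1
      ring
    have hinterp : cubeExpect (fun x => (noiseOp s f x)^2)
        ≤ (∑ S : Finset (Fin n), w S * c S)^(1-lam) * (∑ S : Finset (Fin n), c S)^lam := by
      have h1 : cubeExpect (fun x => (noiseOp s f x)^2)
          = ∑ S : Finset (Fin n), (w S)^(1-lam) * c S := by
        rw [cubeExpect_congr
          (fun x => by ring : ∀ x, (noiseOp s f x)^2 = noiseOp s f x * noiseOp s f x)]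
        rw [expect_noise_mul_noise]
        exact Finset.sum_congr rfl fun S _ => by rw [← hwe S, hcdef]
      rw [h1]
      exact holder_interp _ w c hwnn hcnn hlam0 hlam1
    have hZ : 0 ≤ cubeExpect (fun x => (noiseOp s f x)^2) :=
      cubeExpect_nonneg fun x => sq_nonneg _
    have hfin : cubeNorm 2 (noiseOp s f)
        ≤ cubeNorm 2 (noiseOp ρ f)^(1-lam) * cubeNorm 2 f^lam := by
      rw [cubeNorm_two_eq, cubeNorm_two_eq, cubeNorm_two_eq, hEρ, hEf]
      calc (cubeExpect (fun x => (noiseOp s f x)^2))^((1:ℝ)/2)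
          ≤ ((∑ S : Finset (Fin n), w S * c S)^(1-lam)
            * (∑ S : Finset (Fin n), c S)^lam)^((1:ℝ)/2) :=
            Real.rpow_le_rpow hZ hinterp (by norm_num)
        _ = ((∑ S : Finset (Fin n), w S * c S)^((1:ℝ)/2))^(1-lam)
            * ((∑ S : Finset (Fin n), c S)^((1:ℝ)/2))^lam := by
            rw [Real.mul_rpow (Real.rpow_nonneg hXnn _) (Real.rpow_nonneg hYnn _),
              ← Real.rpow_mul hXnn, ← Real.rpow_mul hYnn,
              ← Real.rpow_mul hXnn, ← Real.rpow_mul hYnn]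
            congr 1
            · congr 1
              ring
            · congr 1
              ring
    exact hstep1.trans hfin
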